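/- If (σ, π) is a hedge for a game option in a discrete market, i.e. the self-financing portfolio value satisfies W^π_{σ∧t} ≥ H(σ,t) for all t ∈ {0,…,N}, and the discounted portfolio value is a martingale under a martingale measure Q, then the initial capital satisfies W^π_0 ≥ sup_τ E_Q[(1+r)^{-σ∧τ} H(σ,τ)] ≥ inf_{σ'} sup_τ E_Q[(1+r)^{-σ'∧τ} H(σ',τ)]. -/

import Mathlib

open MeasureTheory

/-- If `(σ, π)` is a hedge for a game option in a discrete market, i.e. the
self-financing portfolio value satisfies `W^π_{σ∧t} ≥ H(σ,t)` for all `t ∈ {0,…,N}`, and the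
discounted portfolio value is a martingale under a martingale measure `Q`, then
`W^π_0 ≥ sup_τ E_Q[(1+r)^{-σ∧τ} H(σ,τ)] ≥ inf_{σ'} sup_τ E_Q[(1+r)^{-σ'∧τ} H(σ',τ)]`. -/
theorem hedge_initial_capital_ge {Ω : Type*} {m : MeasurableSpace Ω} {Q : Measure Ω}
    [IsProbabilityMeasure Q] (ℱ : Filtration ℕ m) (N : ℕ) (r : ℝ) (hr : 0 < r)
    (X Y W : ℕ → Ω → ℝ)
    (hX : Adapted ℱ X) (hY : Adapted ℱ Y)
    (hY0 : ∀ n ω, 0 ≤ Y n ω) (hYX : ∀ n ω, Y n ω ≤ X n ω)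
    (σ : Ω → ℕ) (hσ : IsStoppingTime ℱ (fun ω => (σ ω : WithTop ℕ))) (hσN : ∀ ω, σ ω ≤ N)
    (hmart : Martingale (fun k ω => ((1 + r)⁻¹) ^ k * W k ω) ℱ Q)
    (hhedge : ∀ t ≤ N, ∀ ω,
      (if σ ω < t then X (σ ω) ω else Y t ω) ≤ W (min (σ ω) t) ω) :
    (⨆ τ : {τ : Ω → ℕ // IsStoppingTime ℱ (fun ω => (τ ω : WithTop ℕ)) ∧ ∀ ω, τ ω ≤ N},
        ∫ ω, ((1 + r)⁻¹) ^ (min (σ ω) (τ.1 ω)) *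
          (if σ ω < τ.1 ω then X (σ ω) ω else Y (τ.1 ω) ω) ∂Q) ≤ ∫ ω, W 0 ω ∂Q ∧
    (⨅ σ' : {σ' : Ω → ℕ // IsStoppingTime ℱ (fun ω => (σ' ω : WithTop ℕ)) ∧ ∀ ω, σ' ω ≤ N},
      ⨆ τ : {τ : Ω → ℕ // IsStoppingTime ℱ (fun ω => (τ ω : WithTop ℕ)) ∧ ∀ ω, τ ω ≤ N},
        ∫ ω, ((1 + r)⁻¹) ^ (min (σ'.1 ω) (τ.1 ω)) *
          (if σ'.1 ω < τ.1 ω then X (σ'.1 ω) ω else Y (τ.1 ω) ω) ∂Q) ≤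
      (⨆ τ : {τ : Ω → ℕ // IsStoppingTime ℱ (fun ω => (τ ω : WithTop ℕ)) ∧ ∀ ω, τ ω ≤ N},
        ∫ ω, ((1 + r)⁻¹) ^ (min (σ ω) (τ.1 ω)) *
          (if σ ω < τ.1 ω then X (σ ω) ω else Y (τ.1 ω) ω) ∂Q) := by
  have hrpos : (0:ℝ) < (1 + r)⁻¹ := by positivity
  -- nonnegativity of the discounted payoff
  have hnonneg : ∀ (σ' τ : Ω → ℕ) (ω : Ω),
      (0:ℝ) ≤ ((1 + r)⁻¹) ^ (min (σ' ω) (τ ω)) *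
        (if σ' ω < τ ω then X (σ' ω) ω else Y (τ ω) ω) := by
    intro σ' τ ω
    refine mul_nonneg (pow_nonneg hrpos.le _) ?_
    split
    · exact le_trans (hY0 _ _) (hYX _ _)
    · exact hY0 _ _
  have hne : Nonempty {τ : Ω → ℕ // IsStoppingTime ℱ (fun ω => (τ ω : WithTop ℕ)) ∧ ∀ ω, τ ω ≤ N} :=
    ⟨⟨fun _ => 0, isStoppingTime_const ℱ 0, fun _ => Nat.zero_le N⟩⟩
  constructor
  · -- sup over τ ≤ ∫ W 0
    refine ciSup_le ?_
    intro τ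
    obtain ⟨τf, hτ, hτN⟩ := τ
    set ρ : Ω → ℕ := fun ω => min (σ ω) (τf ω) with hρdef
    have hρ : IsStoppingTime ℱ (fun ω => (ρ ω : WithTop ℕ)) := by
      exact hσ.min hτ
    have hρN : ∀ ω, ρ ω ≤ N := fun ω => le_trans (min_le_left _ _) (hσN ω)
    have hρN' : ∀ ω, (ρ ω : WithTop ℕ) ≤ N := fun ω => WithTop.coe_le_coe.mpr (hρN ω)
    set M : ℕ → Ω → ℝ := fun k ω => ((1 + r)⁻¹) ^ k * W k ω with hMdef
    have hint : Integrable (stoppedValue M (fun ω => (ρ ω : WithTop ℕ))) Q :=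
      integrable_stoppedValue ℕ hρ hmart.integrable hρN'
    have hle : ∀ ω, ((1 + r)⁻¹) ^ (min (σ ω) (τf ω)) *
        (if σ ω < τf ω then X (σ ω) ω else Y (τf ω) ω) ≤ stoppedValue M (fun ω => (ρ ω : WithTop ℕ)) ω := by
      intro ω
      have := hhedge (τf ω) (hτN ω) ω
      show _ ≤ ((1 + r)⁻¹) ^ (min (σ ω) (τf ω)) * W (min (σ ω) (τf ω)) ω
      simpa [stoppedValue, hMdef] using
        mul_le_mul_of_nonneg_left this (pow_nonneg hrpos.le (min (σ ω) (τf ω)))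
    have h1 : (∫ ω, ((1 + r)⁻¹) ^ (min (σ ω) (τf ω)) *
        (if σ ω < τf ω then X (σ ω) ω else Y (τf ω) ω) ∂Q) ≤ ∫ ω, stoppedValue M (fun ω => (ρ ω : WithTop ℕ)) ω ∂Q :=
      integral_mono_of_nonneg (Filter.Eventually.of_forall (hnonneg σ τf))
        hint (Filter.Eventually.of_forall hle)
    refine h1.trans ?_
    -- ∫ stoppedValue M (fun ω => (ρ ω : WithTop ℕ)) = ∫ M N = ∫ M 0 = ∫ W 0
    have h2 : (∫ ω, stoppedValue M (fun ω => (ρ ω : WithTop ℕ)) ω ∂Q) = ∫ ω, M N ω ∂Q := by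
      rw [integral_congr_ae (hmart.stoppedValue_ae_eq_condExp_of_le_const hρ hρN')]
      exact integral_condExp (hρ.measurableSpace_le_of_le hρN')
    have h3 : (∫ ω, M N ω ∂Q) = ∫ ω, M 0 ω ∂Q := by
      rw [← integral_condExp (ℱ.le 0) (f := M N)]
      exact integral_congr_ae (hmart.condExp_ae_eq (Nat.zero_le N))
    have h4 : (∫ ω, M 0 ω ∂Q) = ∫ ω, W 0 ω ∂Q := by
      simp [hMdef]
    rw [h2, h3, h4]
  · -- inf ≤ value at σ
    have hbdd : BddBelow (Set.range fun σ' : {σ' : Ω → ℕ // IsStoppingTime ℱ (fun ω => (σ' ω : WithTop ℕ)) ∧ ∀ ω, σ' ω ≤ N} =>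
        ⨆ τ : {τ : Ω → ℕ // IsStoppingTime ℱ (fun ω => (τ ω : WithTop ℕ)) ∧ ∀ ω, τ ω ≤ N},
          ∫ ω, ((1 + r)⁻¹) ^ (min (σ'.1 ω) (τ.1 ω)) *
            (if σ'.1 ω < τ.1 ω then X (σ'.1 ω) ω else Y (τ.1 ω) ω) ∂Q) := by
      refine ⟨0, ?_⟩
      rintro x ⟨σ', rfl⟩
      exact Real.iSup_nonneg fun τ =>
        integral_nonneg fun ω => hnonneg σ'.1 τ.1 ω
    exact ciInf_le hbdd ⟨σ, hσ, hσN⟩
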